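/- The map (v, μ) ↦ (v², μ·v) from 𝕌 × ℝ to the Möbius set M = {(u,z) ∈ 𝕌 × ℂ : u·conj(z) = z} is surjective, and two pairs (v, μ), (v', μ') have the same image if and only if (v', μ') = ±(v, μ). -/

import Mathlib

open Complex

theorem stmt_2 :
    (∀ p : ℂ × ℂ, ‖p.1‖ = 1 → p.1 * (starRingEnd ℂ) p.2 = p.2 →
      ∃ (v : ℂ) (μ : ℝ), ‖v‖ = 1 ∧ (v ^ 2, (μ : ℂ) * v) = p) ∧
    (∀ (v v' : ℂ) (μ μ' : ℝ), ‖v‖ = 1 → ‖v'‖ = 1 →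
      ((v ^ 2, (μ : ℂ) * v) = (v' ^ 2, (μ' : ℂ) * v') ↔
        ((v', μ') = (v, μ) ∨ (v', μ') = (-v, -μ)))) := by
  constructor
  · rintro ⟨u, z⟩ hu huz
    simp only at hu huz ⊢
    obtain ⟨v, hv⟩ := Complex.isAlgClosed.exists_pow_nat_eq u (n := 2) (by norm_num)
    have hva : ‖v‖ = 1 := by
      have h2 : ‖v‖ ^ 2 = 1 := by rw [← norm_pow, hv, hu]
      nlinarith [norm_nonneg v]
    have hvc : v * (starRingEnd ℂ) v = 1 := by
      rw [Complex.mul_conj, Complex.normSq_eq_norm_sq, hva]; norm_num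
    have hz : z = v ^ 2 * (starRingEnd ℂ) z := by rw [hv]; exact huz.symm
    have hreal : (starRingEnd ℂ) (z * (starRingEnd ℂ) v) = z * (starRingEnd ℂ) v := by
      rw [map_mul, Complex.conj_conj]
      linear_combination (-(starRingEnd ℂ) v) * hz + (-(v * (starRingEnd ℂ) z)) * hvc
    have hre : ((z * (starRingEnd ℂ) v).re : ℂ) = z * (starRingEnd ℂ) v :=
      Complex.conj_eq_iff_re.mp hreal
    refine ⟨v, (z * (starRingEnd ℂ) v).re, hva, ?_⟩
    refine Prod.ext hv ?_
    show ((z * (starRingEnd ℂ) v).re : ℂ) * v = z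
    rw [hre]
    linear_combination z * hvc
  · intro v v' μ μ' hv hv'
    have hv0 : v ≠ 0 := by intro h0; simp [h0] at hv
    constructor
    · intro h
      rw [Prod.mk.injEq] at h
      obtain ⟨h1, h2⟩ := h
      have hfac : (v' - v) * (v' + v) = 0 := by linear_combination -h1
      rcases mul_eq_zero.mp hfac with h | h
      · left
        have hvv : v' = v := sub_eq_zero.mp h
        rw [hvv] at h2
        have : (μ : ℂ) = (μ' : ℂ) := mul_right_cancel₀ hv0 h2
        have hμ : μ' = μ := (Complex.ofReal_inj.mp this).symm
        rw [hvv, hμ]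
      · right
        have hvv : v' = -v := eq_neg_of_add_eq_zero_left h
        rw [hvv] at h2
        have : (μ : ℂ) = (-μ' : ℂ) := by
          apply mul_right_cancel₀ hv0
          linear_combination h2
        have h3 : ((μ' : ℂ)) = ((-μ : ℝ) : ℂ) := by push_cast; linear_combination this
        have hμ : μ' = -μ := Complex.ofReal_inj.mp h3
        rw [hvv, hμ]
    · rintro (h | h) <;> rw [Prod.mk.injEq] at h <;> obtain ⟨h1, h2⟩ := h <;>
        subst h1 <;> subst h2 <;> refine Prod.ext (by ring) (by push_cast; ring)
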